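/- Let t ∈ P. If t = s⁰ → s¹ → ⋯ → sᵏ and t = r⁰ → r¹ → ⋯ → r^{k'} are two maximal rewrite sequences from t (so sᵏ and r^{k'} are normal forms), then sᵏ = r^{k'} and k = k'; that is, the resulting normal form and the number of steps are independent of the choices made during the execution of the algorithm. -/
import Mathlib


open scoped BigOperators

/-- One step `s → s'` of the continuous O'Hara algorithm on `ℝ^m`:
for some index `j` with `s_j ≥ b_j`, subtract `b_j` from the `j`-th
coordinate and add `a_{j-1}` to the `(j-1)`-st coordinate
(indices cyclically modulo `m`). -/
def CStep (m : ℕ) [NeZero m] (a b : Fin m → ℝ) (s s' : Fin m → ℝ) : Prop :=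
  ∃ j : Fin m, b j ≤ s j ∧
    ∀ l, s' l = s l + (if l = j - 1 then a (j - 1) else 0)
                    - (if l = j then b j else 0)

/-- Membership in the half-open box `[0,a_1) × ⋯ × [0,a_m)`. -/
def InBox {m : ℕ} (a : Fin m → ℝ) (t : Fin m → ℝ) : Prop :=
  ∀ j, 0 ≤ t j ∧ t j < a j

namespace OharaConf

variable {m : ℕ} [NeZero m]

/-- Normal form. -/
def IsNF (b x : Fin m → ℝ) : Prop := ∀ j, x j < b j

/-- There is a rewrite sequence of length `k` from `x`. -/
def Seq (a b : Fin m → ℝ) (x : Fin m → ℝ) (k : ℕ) : Prop :=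
  ∃ s : ℕ → Fin m → ℝ, s 0 = x ∧ ∀ l < k, CStep m a b (s l) (s (l + 1))

/-- There is a maximal rewrite sequence of length `k` from `x` ending at `e`. -/
def MSeq (a b : Fin m → ℝ) (x : Fin m → ℝ) (k : ℕ) (e : Fin m → ℝ) : Prop :=
  ∃ s : ℕ → Fin m → ℝ, s 0 = x ∧ (∀ l < k, CStep m a b (s l) (s (l + 1))) ∧
    s k = e ∧ IsNF b e

lemma nf_no_step {a b x y : Fin m → ℝ} (hx : IsNF b x) (h : CStep m a b x y) : False := by
  obtain ⟨j, hj, -⟩ := h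
  exact absurd hj (not_le.mpr (hx j))

lemma step_of_not_nf {a b x : Fin m → ℝ} (hx : ¬ IsNF b x) : ∃ y, CStep m a b x y := by
  rw [IsNF] at hx
  push_neg at hx
  obtain ⟨j, hj⟩ := hx
  exact ⟨fun l => x l + (if l = j - 1 then a (j - 1) else 0) - (if l = j then b j else 0),
    j, hj, fun l => rfl⟩

lemma mseq_nf {a b x : Fin m → ℝ} (hx : IsNF b x) : MSeq a b x 0 x :=
  ⟨fun _ => x, rfl, fun l hl => absurd hl (Nat.not_lt_zero l), rfl, hx⟩

lemma seq_zero {a b : Fin m → ℝ} (x : Fin m → ℝ) : Seq a b x 0 :=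
  ⟨fun _ => x, rfl, fun l hl => absurd hl (Nat.not_lt_zero l)⟩

lemma seq_prepend {a b x y : Fin m → ℝ} {k : ℕ} (hxy : CStep m a b x y)
    (h : Seq a b y k) : Seq a b x (k + 1) := by
  obtain ⟨s, hs0, hs⟩ := h
  refine ⟨fun n => Nat.casesOn n x s, rfl, ?_⟩
  intro l hl
  cases l with
  | zero => simpa [hs0] using hxy
  | succ l => exact hs l (by omega)

lemma mseq_prepend {a b x y e : Fin m → ℝ} {k : ℕ} (hxy : CStep m a b x y)
    (h : MSeq a b y k e) : MSeq a b x (k + 1) e := by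
  obtain ⟨s, hs0, hs, hk, hnf⟩ := h
  refine ⟨fun n => Nat.casesOn n x s, rfl, ?_, hk, hnf⟩
  intro l hl
  cases l with
  | zero => simpa [hs0] using hxy
  | succ l => exact hs l (by omega)

lemma seq_tail {a b x : Fin m → ℝ} {k : ℕ} (h : Seq a b x (k + 1)) :
    ∃ y, CStep m a b x y ∧ Seq a b y k := by
  obtain ⟨s, hs0, hs⟩ := h
  exact ⟨s 1, hs0 ▸ hs 0 (by omega),
    fun n => s (n + 1), rfl, fun l hl => hs (l + 1) (by omega)⟩

lemma mseq_tail {a b x e : Fin m → ℝ} {k : ℕ} (h : MSeq a b x (k + 1) e) :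
    ∃ y, CStep m a b x y ∧ MSeq a b y k e := by
  obtain ⟨s, hs0, hs, hk, hnf⟩ := h
  exact ⟨s 1, hs0 ▸ hs 0 (by omega),
    fun n => s (n + 1), rfl, fun l hl => hs (l + 1) (by omega), hk, hnf⟩

/-- The diamond property: two distinct one-step successors have a common successor. -/
lemma diamond {a b x y z : Fin m → ℝ} (ha : ∀ j, 0 < a j)
    (hxy : CStep m a b x y) (hxz : CStep m a b x z) :
    y = z ∨ ∃ u, CStep m a b y u ∧ CStep m a b z u := by
  obtain ⟨j, hj, hy⟩ := hxy
  obtain ⟨j', hj', hz⟩ := hxz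
  by_cases hjj : j = j'
  · left
    funext l
    rw [hy l, hz l, hjj]
  · right
    refine ⟨fun l => x l + ((if l = j - 1 then a (j - 1) else 0)
        - (if l = j then b j else 0))
      + ((if l = j' - 1 then a (j' - 1) else 0) - (if l = j' then b j' else 0)),
      ⟨j', ?_, ?_⟩, ⟨j, ?_, ?_⟩⟩
    · -- b j' ≤ y j'
      have h1 := hy j'
      rw [if_neg (show ¬ j' = j from fun h => hjj h.symm)] at h1
      have hpos : (0:ℝ) ≤ if j' = j - 1 then a (j - 1) else 0 := by
        split_ifs with h
        · exact le_of_lt (ha _)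
        · exact le_refl 0
      linarith
    · intro l; simp only [hy l]; ring
    · -- b j ≤ z j
      have h1 := hz j
      rw [if_neg (show ¬ j = j' from hjj)] at h1
      have hpos : (0:ℝ) ≤ if j = j' - 1 then a (j' - 1) else 0 := by
        split_ifs with h
        · exact le_of_lt (ha _)
        · exact le_refl 0
      linarith
    · intro l; simp only [hz l]; ring

/-- If all rewrite sequences from `u` are bounded in length, some maximal
sequence from `u` exists. -/
lemma exists_mseq {a b : Fin m → ℝ} (ha : ∀ j, 0 < a j) :
    ∀ (B : ℕ) (u : Fin m → ℝ), (∀ n, Seq a b u n → n ≤ B) →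
      ∃ l e, MSeq a b u l e := by
  intro B
  induction B with
  | zero =>
    intro u hB
    by_cases hu : IsNF b u
    · exact ⟨0, u, mseq_nf hu⟩
    · obtain ⟨y, hy⟩ := step_of_not_nf (a := a) hu
      exact absurd (hB 1 (seq_prepend hy (seq_zero y))) (by omega)
  | succ B IH =>
    intro u hB
    by_cases hu : IsNF b u
    · exact ⟨0, u, mseq_nf hu⟩
    · obtain ⟨y, hy⟩ := step_of_not_nf (a := a) hu
      obtain ⟨l, e, hle⟩ := IH y (fun n hn => by
        have := hB (n + 1) (seq_prepend hy hn); omega)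
      exact ⟨l + 1, e, mseq_prepend hy hle⟩

/-- Main lemma: the length and endpoint of maximal sequences are unique, and
all sequences are bounded by the maximal length. -/
lemma main {a b : Fin m → ℝ} (ha : ∀ j, 0 < a j) :
    ∀ (k : ℕ) (x e : Fin m → ℝ), MSeq a b x k e →
      (∀ n, Seq a b x n → n ≤ k) ∧
      (∀ k' e', MSeq a b x k' e' → k' = k ∧ e' = e) := by
  intro k
  induction k using Nat.strong_induction_on with
  | _ k IH =>
  intro x e hme
  match k with
  | 0 =>
    obtain ⟨s, hs0, -, hk, hnf⟩ := hme
    have hx : IsNF b x := by rw [← hs0, hk] at *; exact hk ▸ hnf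
    have hxe : x = e := by rw [← hs0, hk]
    constructor
    · intro n hn
      match n with
      | 0 => exact le_refl 0
      | n + 1 =>
        obtain ⟨y, hy, -⟩ := seq_tail hn
        exact absurd hy (fun h => nf_no_step hx h)
    · intro k' e' hm'
      match k' with
      | 0 =>
        obtain ⟨s', hs0', -, hk', -⟩ := hm'
        exact ⟨rfl, by rw [← hk', hs0', hxe]⟩
      | k' + 1 =>
        obtain ⟨y, hy, -⟩ := mseq_tail hm'
        exact absurd hy (fun h => nf_no_step hx h)
  | k0 + 1 =>
    obtain ⟨y, hxy, hye⟩ := mseq_tail hme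
    have IHy := IH k0 (by omega) y e hye
    -- helper: given another first step x → z, we get `MSeq a b z k0 e`.
    have key : ∀ z, CStep m a b x z → MSeq a b z k0 e := by
      intro z hxz
      rcases diamond ha hxy hxz with h | ⟨u, hyu, hzu⟩
      · exact h ▸ hye
      · -- all sequences from u are bounded
        have hub : ∀ n, Seq a b u n → n ≤ k0 := fun n hn => by
          have := IHy.1 (n + 1) (seq_prepend hyu hn); omega
        obtain ⟨l, f, hlf⟩ := exists_mseq ha k0 u hub
        have h1 : l + 1 = k0 ∧ f = e := IHy.2 (l + 1) f (mseq_prepend hyu hlf)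
        have : MSeq a b z (l + 1) f := mseq_prepend hzu hlf
        rwa [h1.1, h1.2] at this
    constructor
    · intro n hn
      match n with
      | 0 => omega
      | n + 1 =>
        obtain ⟨z, hxz, hz⟩ := seq_tail hn
        have := (IH k0 (by omega) z e (key z hxz)).1 n hz
        omega
    · intro k' e' hm'
      match k' with
      | 0 =>
        obtain ⟨s', hs0', -, hk', hnf'⟩ := hm'
        have : IsNF b x := by rw [← hs0']; exact hk' ▸ hnf'
        exact absurd hxy (fun h => nf_no_step this h)
      | k' + 1 =>
        obtain ⟨z, hxz, hz⟩ := mseq_tail hm'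
        have := (IH k0 (by omega) z e (key z hxz)).2 k' e' hz
        exact ⟨by omega, this.2⟩

end OharaConf

/-- confluence of the continuous O'Hara algorithm: any two
maximal rewrite sequences from `t ∈ P` end at the same normal form and
have the same length. -/
theorem ohara_confluence {m : ℕ} [NeZero m] (i a b : Fin m → ℝ)
    (hi : ∀ j, 0 < i j) (ha : ∀ j, 0 < a j) (hb : ∀ j, 0 < b j)
    (hiab : ∀ j, i j * a j = i (j + 1) * b (j + 1))
    (t : Fin m → ℝ) (ht : InBox a t)
    (s : ℕ → Fin m → ℝ) (k : ℕ) (hs0 : s 0 = t)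
    (hs : ∀ l < k, CStep m a b (s l) (s (l + 1)))
    (hsend : ∀ j, s k j < b j)
    (r : ℕ → Fin m → ℝ) (k' : ℕ) (hr0 : r 0 = t)
    (hr : ∀ l < k', CStep m a b (r l) (r (l + 1)))
    (hrend : ∀ j, r k' j < b j) :
    s k = r k' ∧ k = k' := by
  have h1 : OharaConf.MSeq a b t k (s k) := ⟨s, hs0, hs, rfl, hsend⟩
  have h2 : OharaConf.MSeq a b t k' (r k') := ⟨r, hr0, hr, rfl, hrend⟩
  have := (OharaConf.main ha k t (s k) h1).2 k' (r k') h2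
  exact ⟨this.2.symm, this.1.symm⟩
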